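/- Let 𝐤=(k₁,…,k_r) be a nonempty index of weight k. Then the following identity holds in 𝔥[[t]]: k·w⋆_Ŝ(k+1) = k·w⋆(k+1) + (−1)^{k+1} Σ_{l₁,…,l_r ≥ 0} (k+l)·(∏_{j=1}^r binom(k_j+l_j−1, l_j))·w⋆(k+l+1)·t^{l}, where l := l₁+⋯+l_r and (k+1), (k+l+1) denote depth-one indices; moreover w⋆(n) = y·x^{n−1} for every positive integer n. -/

import Mathlib

/-- `𝔥 = ℚ⟨x,y⟩`, realized as the monoid algebra over `ℚ` of the free monoid on two
letters; letter `0` is `x` and letter `1` is `y`. -/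
abbrev H : Type := MonoidAlgebra ℚ (FreeMonoid (Fin 2))

/-- The word `u₁⋯uₙ`, as an element of `𝔥`. -/
noncomputable def word (l : List (Fin 2)) : H := MonoidAlgebra.single (FreeMonoid.ofList l) 1

/-- The letter `x ∈ 𝔥`. -/
noncomputable def xH : H := word [0]

/-- The letter `y ∈ 𝔥`. -/
noncomputable def yH : H := word [1]

/-- The shuffle product of two words, as an element of `𝔥`. -/
noncomputable def shw : List (Fin 2) → List (Fin 2) → H
  | [], w => word w
  | a :: u, [] => word (a :: u)
  | a :: u, b :: v => word [a] * shw u (b :: v) + word [b] * shw (a :: u) v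
  termination_by u v => u.length + v.length

/-- The shuffle product `⧢` on `𝔥`: the `ℚ`-bilinear extension of the shuffle product
of words. -/
noncomputable def sh (f g : H) : H :=
  Finsupp.sum f.coeff fun u c => Finsupp.sum g.coeff fun v d => (c * d) • shw u.toList v.toList

open Classical in
/-- `W(X) = Σ_f δ(f⁻¹(1))·δ(f⁻¹(2))⋯δ(f⁻¹(n)) ∈ 𝔥`, the sum ranging over all
order-preserving bijections `f : X → {1,…,n}`, `n = #X`. -/
noncomputable def Wp (α : Type) [Fintype α] [PartialOrder α] (δ : α → Fin 2) : H :=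
  ∑ f : α ≃ Fin (Fintype.card α),
    if Monotone (⇑f) then word (List.ofFn fun i => δ (f.symm i)) else 0

/-- The underlying set of the labeled poset `X⋆(𝐤)`: the disjoint union of the chains
`C_j = {c_{j,0} < ⋯ < c_{j,k_j−1}}`, `1 ≤ j ≤ r`. -/
def Carrier (K : List ℕ) : Type := (j : Fin K.length) × Fin (K.get j)

instance (K : List ℕ) : Fintype (Carrier K) :=
  inferInstanceAs (Fintype ((j : Fin K.length) × Fin (K.get j)))

instance (K : List ℕ) : DecidableEq (Carrier K) :=
  inferInstanceAs (DecidableEq ((j : Fin K.length) × Fin (K.get j)))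

/-- The partial order of `X⋆(𝐤)`: the order generated by the chain relations together
with the relations `c_{j+1,k_{j+1}−1} > c_{j,0}` (written out explicitly: one can jump
from the bottom of a chain to the top of a later chain provided all intermediate chains
are singletons). -/
def cle (K : List ℕ) (p q : (j : Fin K.length) × Fin (K.get j)) : Prop :=
  (p.1 = q.1 ∧ p.2.val ≤ q.2.val) ∨
    (p.1 < q.1 ∧ p.2.val = 0 ∧ q.2.val + 1 = K.get q.1 ∧
      ∀ m : Fin K.length, p.1 < m → m < q.1 → K.get m = 1)

theorem sigEq {K : List ℕ} (p q : (j : Fin K.length) × Fin (K.get j))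
    (h1 : p.1 = q.1) (h2 : p.2.val = q.2.val) : p = q := by
  obtain ⟨j, a⟩ := p
  obtain ⟨j', b⟩ := q
  have h1' : j = j' := h1
  subst h1'
  have h2' : a = b := Fin.ext h2
  rw [h2']

theorem cle_trans (K : List ℕ) (p q s : (j : Fin K.length) × Fin (K.get j))
    (h : cle K p q) (h' : cle K q s) : cle K p s := by
  rcases h with ⟨h1, h2⟩ | ⟨h1, h2, h3, h4⟩
  · rcases h' with ⟨g1, g2⟩ | ⟨g1, g2, g3, g4⟩
    · exact Or.inl ⟨h1.trans g1, h2.trans g2⟩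
    · exact Or.inr ⟨h1.le.trans_lt g1, by omega,
        g3, fun m hm1 hm2 => g4 m (h1.symm.le.trans_lt hm1) hm2⟩
  · rcases h' with ⟨g1, g2⟩ | ⟨g1, g2, g3, g4⟩
    · have hks : K.get q.1 = K.get s.1 := by rw [g1]
      have hlt : s.2.val < K.get s.1 := s.2.isLt
      exact Or.inr ⟨h1.trans_le g1.le, h2, by omega,
        fun m hm1 hm2 => h4 m hm1 (hm2.trans_le g1.symm.le)⟩
    · refine Or.inr ⟨h1.trans g1, h2, g3, fun m hm1 hm2 => ?_⟩
      rcases lt_trichotomy m q.1 with hc | hc | hc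
      · exact h4 m hm1 hc
      · rw [hc]; omega
      · exact g4 m hc hm2

theorem cle_antisymm (K : List ℕ) (p q : (j : Fin K.length) × Fin (K.get j))
    (h : cle K p q) (h' : cle K q p) : p = q := by
  rcases h with ⟨h1, h2⟩ | ⟨h1, h2, h3, h4⟩
  · rcases h' with ⟨g1, g2⟩ | ⟨g1, g2, g3, g4⟩
    · exact sigEq p q h1 (le_antisymm h2 g2)
    · rw [h1] at g1; exact absurd g1 (lt_irrefl _)
  · rcases h' with ⟨g1, g2⟩ | ⟨g1, g2, g3, g4⟩
    · rw [g1] at h1; exact absurd h1 (lt_irrefl _)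
    · exact absurd (h1.trans g1) (lt_irrefl _)

instance (K : List ℕ) : PartialOrder (Carrier K) where
  le := cle K
  le_refl p := Or.inl ⟨rfl, le_refl _⟩
  le_trans := cle_trans K
  le_antisymm := cle_antisymm K

/-- The label map of `X⋆(𝐤)`: the bottom element of each chain is labeled `y` (= `1`),
all other elements are labeled `x` (= `0`). -/
def lab (K : List ℕ) : Carrier K → Fin 2 := fun p => if p.2.val = 0 then 1 else 0

/-- `w⋆(𝐤) := W(X⋆(𝐤))`, with `w⋆(∅) = 1`. -/
noncomputable def wstar (K : List ℕ) : H := Wp (Carrier K) (lab K)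

/-- The coefficientwise shuffle product on `𝔥[[t]]`. -/
noncomputable def shP (f g : PowerSeries H) : PowerSeries H :=
  PowerSeries.mk fun n => ∑ p ∈ Finset.HasAntidiagonal.antidiagonal n,
    sh (PowerSeries.coeff p.1 f) (PowerSeries.coeff p.2 g)

/-- `F(𝐤) = Σ_{l₁,…,l_r ≥ 0} (∏_j (−1)^{k_j} binom(k_j+l_j−1,l_j)) ·
w⋆(k_r+l_r,…,k₁+l₁) · t^{l₁+⋯+l_r} ∈ 𝔥[[t]]`, with `F(∅) = 1`. -/
noncomputable def Fser (K : List ℕ) : PowerSeries H :=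
  PowerSeries.mk fun n => ∑ l ∈ Finset.Nat.antidiagonalTuple K.length n,
    (∏ j : Fin K.length, ((-1 : ℚ) ^ (K.get j) * ((K.get j + l j - 1).choose (l j) : ℚ))) •
      wstar ((List.ofFn fun j : Fin K.length => K.get j + l j).reverse)

/-- `w⋆_Ŝ(𝐤) = Σ_{i=0}^{r} w⋆(k₁,…,k_i) ⧢ F(k_{i+1},…,k_r) ∈ 𝔥[[t]]`. -/
noncomputable def wstarS (K : List ℕ) : PowerSeries H :=
  ∑ i ∈ Finset.range (K.length + 1),
    shP (PowerSeries.C (wstar (K.take i))) (Fser (K.drop i))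

section Aux

theorem word_nil : word [] = (1 : H) := rfl

theorem word_append (l1 l2 : List (Fin 2)) : word (l1 ++ l2) = word l1 * word l2 := by
  rw [word, word, word, MonoidAlgebra.single_mul_single, one_mul]
  rfl

theorem xH_pow (m : ℕ) : xH ^ m = word (List.replicate m 0) := by
  induction m with
  | zero => rw [pow_zero, List.replicate_zero, word_nil]
  | succ m ih =>
      rw [pow_succ, ih, xH, ← word_append, ← List.replicate_succ']

theorem yH_mul_xH_pow (m : ℕ) : yH * xH ^ m = word (1 :: List.replicate m 0) := by
  rw [xH_pow, yH, ← word_append, List.singleton_append]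

theorem sh_zero_left (g : H) : sh 0 g = 0 := by
  rw [sh, MonoidAlgebra.coeff_zero]; exact Finsupp.sum_zero_index

theorem sh_zero_right (f : H) : sh f 0 = 0 := by
  rw [sh]
  simp_rw [MonoidAlgebra.coeff_zero, Finsupp.sum_zero_index]
  exact Finset.sum_const_zero

theorem shw_nil_right (l : List (Fin 2)) : shw l [] = word l := by
  cases l with
  | nil => rw [shw]
  | cons a u => rw [shw]

theorem sh_one_left (g : H) : sh (word []) g = g := by
  rw [sh, word]
  rw [MonoidAlgebra.coeff_single, Finsupp.sum_single_index]
  · have : ∀ (v : FreeMonoid (Fin 2)) (d : ℚ),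
        ((1 : ℚ) * d) • shw (FreeMonoid.ofList ([] : List (Fin 2))).toList v.toList
        = MonoidAlgebra.single v d := by
      intro v d
      rw [one_mul, show (FreeMonoid.ofList ([] : List (Fin 2))).toList = [] from rfl, shw, word]
      rw [show FreeMonoid.ofList v.toList = v from FreeMonoid.ofList_toList v]
      rw [MonoidAlgebra.smul_single', mul_one]
    simp_rw [this]
    exact MonoidAlgebra.sum_coeff_single g
  · simp

theorem sh_one_right (f : H) : sh f (word []) = f := by
  rw [sh]
  have : ∀ (u : FreeMonoid (Fin 2)) (c : ℚ), (Finsupp.sum (word []).coeff fun v d =>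
      (c * d) • shw u.toList v.toList) = MonoidAlgebra.single u c := by
    intro u c
    rw [word, MonoidAlgebra.coeff_single, Finsupp.sum_single_index (by simp)]
    rw [mul_one]
    rw [show (FreeMonoid.ofList ([] : List (Fin 2))).toList = [] from rfl]
    rw [shw_nil_right, word]
    rw [show FreeMonoid.ofList u.toList = u from FreeMonoid.ofList_toList u]
    rw [MonoidAlgebra.smul_single', mul_one]
  simp_rw [this]
  exact MonoidAlgebra.sum_coeff_single f

end Aux
section WpAux

open Classical in
theorem Wp_eq_word {α : Type} [Fintype α] [PartialOrder α] (δ : α → Fin 2)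
    (total : ∀ a b : α, a ≤ b ∨ b ≤ a)
    (e : α ≃ Fin (Fintype.card α)) (he : ∀ a b : α, a ≤ b ↔ e a ≤ e b) :
    Wp α δ = word (List.ofFn fun i => δ (e.symm i)) := by
  rw [Wp]
  rw [Finset.sum_eq_single_of_mem e (Finset.mem_univ e)]
  · exact if_pos (fun a b h => (he a b).1 h)
  · intro g _ hg
    rw [if_neg]
    intro hmono
    apply hg
    have hm : ∀ a b : α, g a ≤ g b ↔ a ≤ b := by
      intro a b
      refine ⟨fun h => ?_, fun h => hmono h⟩
      rcases total a b with h' | h'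
      · exact h'
      · exact le_of_eq (g.injective (le_antisymm h (hmono h')))
    let G : α ≃o Fin (Fintype.card α) := ⟨g, hm _ _⟩
    let E : α ≃o Fin (Fintype.card α) := ⟨e, (he _ _).symm⟩
    have hGE : G = E := Subsingleton.elim G E
    have : G.toEquiv = E.toEquiv := congrArg _ hGE
    exact this

end WpAux
section WstarAux

instance : IsEmpty (Carrier []) := ⟨fun p => Fin.elim0 p.1⟩

theorem wstar_nil : wstar [] = word [] := by
  have hc : Fintype.card (Carrier []) = 0 := Fintype.card_eq_zero
  haveI : IsEmpty (Fin (Fintype.card (Carrier []))) := by rw [hc]; infer_instance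
  rw [wstar, Wp_eq_word (lab []) (fun a _ => isEmptyElim a)
    (Equiv.equivOfIsEmpty _ _) (fun a _ => isEmptyElim a)]
  have : (List.ofFn fun i => lab [] ((Equiv.equivOfIsEmpty (Carrier [])
      (Fin (Fintype.card (Carrier [])))).symm i)) = [] :=
    List.eq_nil_of_length_eq_zero (by rw [List.length_ofFn, hc])
  rw [this]

theorem get_singleton (n : ℕ) (j : Fin ([n] : List ℕ).length) : ([n] : List ℕ).get j = n := by
  rcases j with ⟨jv, hj⟩
  have : jv = 0 := by simpa using hj
  subst this
  rfl

theorem carrier_card (n : ℕ) : Fintype.card (Carrier [n]) = n := by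
  have h0 : Fintype.card (Carrier [n])
      = Fintype.card ((j : Fin ([n] : List ℕ).length) × Fin (([n] : List ℕ).get j)) := rfl
  rw [h0, Fintype.card_sigma]
  simp only [Fintype.card_fin, List.get_eq_getElem]
  rw [Fin.sum_univ_getElem]
  simp

/-- The canonical equiv `Carrier [n] ≃ Fin n`. -/
def chainEquiv (n : ℕ) : Carrier [n] ≃ Fin n where
  toFun p := ⟨p.2.val, lt_of_lt_of_le p.2.isLt (get_singleton n p.1).le⟩
  invFun i := ⟨⟨0, by simp⟩, ⟨i.val, by rw [get_singleton]; exact i.isLt⟩⟩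
  left_inv p := by
    refine sigEq _ _ ?_ rfl
    rcases p with ⟨⟨jv, hj⟩, b⟩
    have : jv = 0 := by simpa using hj
    subst this
    rfl
  right_inv i := rfl

theorem carrier_le_iff (n : ℕ) (p q : Carrier [n]) : p ≤ q ↔ p.2.val ≤ q.2.val := by
  constructor
  · rintro (⟨h1, h2⟩ | ⟨h1, _⟩)
    · exact h2
    · exfalso
      rcases p with ⟨⟨jv, hj⟩, _⟩
      rcases q with ⟨⟨jv', hj'⟩, _⟩
      have : jv = 0 := by simpa using hj
      have : jv' = 0 := by simpa using hj'
      simp_all [Fin.lt_def]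
  · intro h
    left
    refine ⟨?_, h⟩
    rcases p with ⟨⟨jv, hj⟩, _⟩
    rcases q with ⟨⟨jv', hj'⟩, _⟩
    have h1 : jv = 0 := by simpa using hj
    have h2 : jv' = 0 := by simpa using hj'
    exact Fin.ext (by simp [h1, h2])

theorem wstar_singleton (n : ℕ) (hn : 0 < n) : wstar [n] = yH * xH ^ (n - 1) := by
  have hc := carrier_card n
  let e : Carrier [n] ≃ Fin (Fintype.card (Carrier [n])) :=
    (chainEquiv n).trans (finCongr hc.symm)
  have he : ∀ p q : Carrier [n], p ≤ q ↔ e p ≤ e q := by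
    intro p q
    rw [carrier_le_iff]
    exact Iff.rfl
  rw [wstar, Wp_eq_word (lab [n]) (fun p q => by
      rw [carrier_le_iff, carrier_le_iff]; exact Nat.le_total _ _) e he]
  have hlab : ∀ i : Fin (Fintype.card (Carrier [n])),
      lab [n] (e.symm i) = if (i : ℕ) = 0 then 1 else 0 := fun i => rfl
  simp_rw [hlab]
  rw [yH_mul_xH_pow]
  congr 1
  rw [show (List.ofFn fun i : Fin (Fintype.card (Carrier [n])) =>
      if (i : ℕ) = 0 then (1 : Fin 2) else 0) = List.ofFn fun i : Fin n =>
      if (i : ℕ) = 0 then (1 : Fin 2) else 0 by rw [hc]]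
  obtain ⟨m, rfl⟩ : ∃ m, n = m + 1 := ⟨n - 1, by omega⟩
  rw [List.ofFn_succ]
  simp
end WstarAux
section McAux

open PowerSeries in
theorem coeff_invOneSubPow (d m : ℕ) :
    PowerSeries.coeff m ((PowerSeries.invOneSubPow ℚ d : ℚ⟦X⟧ˣ) : ℚ⟦X⟧)
      = (Nat.multichoose d m : ℚ) := by
  cases d with
  | zero =>
      rw [invOneSubPow_zero, Units.val_one, coeff_one]
      cases m with
      | zero => simp [Nat.multichoose_zero_right]
      | succ m => simp [Nat.multichoose_zero_succ]
  | succ d =>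
      rw [invOneSubPow_val_succ_eq_mk_add_choose, coeff_mk, Nat.multichoose_eq]
      rw [show d + 1 + m - 1 = d + m by omega, Nat.choose_symm_add]

open PowerSeries in
theorem prod_invOneSubPow {r : ℕ} (a : Fin r → ℕ) :
    (∏ j : Fin r, ((PowerSeries.invOneSubPow ℚ (a j) : ℚ⟦X⟧ˣ) : ℚ⟦X⟧))
      = ((PowerSeries.invOneSubPow ℚ (∑ j, a j) : ℚ⟦X⟧ˣ) : ℚ⟦X⟧) := by
  have h1 : (∏ j, PowerSeries.invOneSubPow ℚ (a j)) = PowerSeries.invOneSubPow ℚ (∑ j, a j) := by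
    simp_rw [invOneSubPow_eq_inv_one_sub_pow]
    rw [Finset.prod_pow_eq_pow_sum]
  rw [← h1]
  exact (map_prod (Units.coeHom ℚ⟦X⟧) _ _).symm

theorem mcConv {r : ℕ} (a : Fin r → ℕ) (n : ℕ) :
    (∑ l ∈ Finset.Nat.antidiagonalTuple r n, ∏ j, (Nat.multichoose (a j) (l j) : ℚ))
      = (Nat.multichoose (∑ j, a j) n : ℚ) := by
  classical
  have h := congrArg (PowerSeries.coeff n) (prod_invOneSubPow a)
  rw [PowerSeries.coeff_prod, coeff_invOneSubPow] at h
  simp_rw [coeff_invOneSubPow] at h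
  rw [← h]
  refine Finset.sum_bij' (fun l _ => Finsupp.equivFunOnFinite.symm l)
    (fun f _ => ⇑f) ?_ ?_ ?_ ?_ ?_
  · intro l hl
    rw [Finset.mem_finsuppAntidiag]
    refine ⟨?_, fun x _ => Finset.mem_univ x⟩
    rw [Finset.Nat.mem_antidiagonalTuple] at hl
    simpa using hl
  · intro f hf
    rw [Finset.mem_finsuppAntidiag] at hf
    rw [Finset.Nat.mem_antidiagonalTuple]
    simpa using hf.1
  · intro l _
    rfl
  · intro f _
    exact Finsupp.equivFunOnFinite_symm_coe f
  · intro l _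
    rfl

end McAux
section Assembly

theorem shP_C_left (a : H) (g : PowerSeries H) :
    shP (PowerSeries.C a) g = PowerSeries.mk fun n => sh a (PowerSeries.coeff n g) := by
  rw [shP]
  apply PowerSeries.ext
  intro n
  rw [PowerSeries.coeff_mk, PowerSeries.coeff_mk]
  rw [Finset.sum_eq_single_of_mem ((0 : ℕ), n)
    (by rw [Finset.HasAntidiagonal.mem_antidiagonal]; ring)]
  · rw [PowerSeries.coeff_zero_C]
  · rintro ⟨p1, p2⟩ hp hne
    rw [Finset.HasAntidiagonal.mem_antidiagonal] at hp
    have hne' : p1 ≠ 0 := by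
      rintro rfl
      exact hne (by simp [← hp])
    rw [PowerSeries.coeff_C, if_neg hne', sh_zero_left]

theorem Fser_nil : Fser [] = PowerSeries.C (word []) := by
  haveI : IsEmpty (Fin (([] : List ℕ).length)) := ⟨fun i => absurd i.isLt (by simp)⟩
  apply PowerSeries.ext
  intro n
  rw [Fser, PowerSeries.coeff_mk, PowerSeries.coeff_C]
  cases n with
  | zero =>
      rw [if_pos rfl]
      have hset : Finset.Nat.antidiagonalTuple (([] : List ℕ).length) 0 = {0} :=
        Finset.Nat.antidiagonalTuple_zero_right _
      rw [hset, Finset.sum_singleton, Finset.prod_of_isEmpty, one_smul]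
      have hl : (List.ofFn fun j : Fin (([] : List ℕ).length) =>
          ([] : List ℕ).get j + (0 : Fin (([] : List ℕ).length) → ℕ) j) = [] :=
        List.eq_nil_of_length_eq_zero (by simp)
      rw [hl]
      rw [show ([] : List ℕ).reverse = [] from rfl]
      exact wstar_nil
  | succ m =>
      rw [if_neg (by omega)]
      have hset : Finset.Nat.antidiagonalTuple (([] : List ℕ).length) (m + 1) = ∅ := by
        apply Finset.eq_empty_of_forall_notMem
        intro l hl
        rw [Finset.Nat.mem_antidiagonalTuple] at hl
        rw [Finset.univ_eq_empty, Finset.sum_empty] at hl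
        omega
      rw [hset]
      exact Finset.sum_empty

theorem wstarS_single (m : ℕ) :
    wstarS [m] = Fser [m] + PowerSeries.C (wstar [m]) := by
  rw [wstarS]
  rw [show ([m] : List ℕ).length + 1 = 2 from rfl]
  rw [Finset.sum_range_succ, Finset.sum_range_one]
  congr 1
  · -- i = 0 term
    rw [show ([m] : List ℕ).take 0 = [] from rfl, show ([m] : List ℕ).drop 0 = [m] from rfl]
    rw [wstar_nil, shP_C_left]
    apply PowerSeries.ext
    intro n
    rw [PowerSeries.coeff_mk, sh_one_left]
  · -- i = 1 term
    rw [show ([m] : List ℕ).take 1 = [m] from rfl, show ([m] : List ℕ).drop 1 = [] from rfl]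
    rw [Fser_nil, shP_C_left]
    apply PowerSeries.ext
    intro n
    rw [PowerSeries.coeff_mk, PowerSeries.coeff_C, PowerSeries.coeff_C]
    split
    · rw [sh_one_right]
    · rw [sh_zero_right]

end Assembly
theorem nat_id (m n : ℕ) :
    (m + 1) * (m + 1 + n).choose n = (m + 1 + n) * ((m + n).choose n) := by
  have h := Nat.add_one_mul_choose_eq (m + n) m
  rw [Nat.choose_symm_add] at h
  rw [show (m + n) + 1 = m + 1 + n by omega] at h
  rw [show (m + 1 + n).choose (m + 1) = (m + 1 + n).choose n from Nat.choose_symm_add] at h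
  exact (mul_comm _ _).trans h.symm

theorem coeff_Fser_single (m n : ℕ) :
    PowerSeries.coeff n (Fser [m + 1])
      = ((-1 : ℚ) ^ (m + 1) * (((m + n).choose n : ℕ) : ℚ)) • wstar [m + n + 1] := by
  haveI : Unique (Fin (([m + 1] : List ℕ).length)) :=
    ⟨⟨⟨0, Nat.one_pos⟩⟩, fun a => Fin.ext (by
      have h2 : (a : ℕ) < 1 := a.isLt
      show (a : ℕ) = 0
      omega)⟩
  rw [Fser, PowerSeries.coeff_mk]
  have hset : (Finset.Nat.antidiagonalTuple (([m + 1] : List ℕ).length) n) = {![n]} :=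
    Finset.Nat.antidiagonalTuple_one n
  rw [hset, Finset.sum_singleton]
  have hprod : (∏ j : Fin (([m + 1] : List ℕ).length), ((-1 : ℚ) ^ (([m + 1] : List ℕ).get j)
      * (((([m + 1] : List ℕ).get j) + ![n] j - 1).choose (![n] j) : ℚ)))
      = (-1 : ℚ) ^ (m + 1) * (((m + 1 + n - 1).choose n : ℕ) : ℚ) := by
    have hj : ∀ j : Fin (([m + 1] : List ℕ).length), ((-1 : ℚ) ^ (([m + 1] : List ℕ).get j)
        * (((([m + 1] : List ℕ).get j) + ![n] j - 1).choose (![n] j) : ℚ))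
        = (-1 : ℚ) ^ (m + 1) * (((m + 1 + n - 1).choose n : ℕ) : ℚ) := by
      rintro ⟨jv, hjv⟩
      have h0 : jv = 0 := by simp at hjv; omega
      subst h0
      rfl
    rw [Finset.univ_unique, Finset.prod_singleton]
    exact hj _
  rw [hprod]
  have hlist : (List.ofFn fun j : Fin (([m + 1] : List ℕ).length) =>
      ([m + 1] : List ℕ).get j + ![n] j) = [m + 1 + n] := by
    apply List.ext_getElem (by simp)
    intro i h1 h2
    have hi : i = 0 := by simp at h2; omega
    subst hi
    rw [List.getElem_ofFn]
    rfl
  rw [hlist, show ([m + 1 + n] : List ℕ).reverse = [m + 1 + n] from rfl]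
  rw [show m + 1 + n - 1 = m + n by omega, show m + 1 + n = m + n + 1 by omega]

/-- The computation finishing the proof of Theorem 2.6 in Hirose–Murahara–Ono: for a
nonempty index `𝐤 = (k₁,…,k_r)` of weight `k`,
`k·w⋆_Ŝ(k+1) = k·w⋆(k+1) + (−1)^{k+1} Σ_{l₁,…,l_r ≥ 0}
  (k+l)·(∏_{j=1}^r binom(k_j+l_j−1,l_j))·w⋆(k+l+1)·t^l` in `𝔥[[t]]`, where
`l = l₁+⋯+l_r`; moreover `w⋆(n) = y·x^{n−1}` for every positive integer `n`. -/
theorem k_smul_wstarS_depth_one (K : List ℕ) (hne : K ≠ []) (hpos : ∀ n ∈ K, 0 < n)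
    (k : ℕ) (hw : K.sum = k) :
    ((k : ℚ) • wstarS [k + 1]
        = PowerSeries.C ((k : ℚ) • wstar [k + 1])
          + PowerSeries.mk (fun n =>
              ∑ l ∈ Finset.Nat.antidiagonalTuple K.length n,
                ((-1 : ℚ) ^ (k + 1) * ((k + n : ℕ) : ℚ) *
                    ∏ j : Fin K.length, ((K.get j + l j - 1).choose (l j) : ℚ)) •
                  wstar [k + n + 1]))
      ∧ ∀ n : ℕ, 0 < n → wstar [n] = yH * xH ^ (n - 1) := by
  constructor
  · have hk : 0 < k := by
      rcases K with _ | ⟨a, K'⟩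
      · exact absurd rfl hne
      · have ha := hpos a (List.mem_cons_self (a := a) (l := K'))
        have hs : a ≤ (a :: K').sum := by
          rw [List.sum_cons]; omega
        omega
    obtain ⟨m, rfl⟩ : ∃ m, k = m + 1 := ⟨k - 1, by omega⟩
    have h4 : (∑ j : Fin K.length, K.get j) = m + 1 := by
      simp only [List.get_eq_getElem]
      rw [Fin.sum_univ_getElem]
      exact hw
    rw [wstarS_single (m + 1 + 1)]
    apply PowerSeries.ext
    intro n
    rw [PowerSeries.coeff_smul, map_add, smul_add, map_add]
    rw [PowerSeries.coeff_C, PowerSeries.coeff_C, PowerSeries.coeff_mk]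
    rw [coeff_Fser_single (m + 1) n]
    rw [← Finset.sum_smul, smul_smul]
    have hite : ((m + 1 : ℕ) : ℚ) • (if n = 0 then wstar [m + 1 + 1] else 0)
        = (if n = 0 then ((m + 1 : ℕ) : ℚ) • wstar [m + 1 + 1] else 0) := by
      split <;> simp
    rw [hite, add_comm _ (if n = 0 then ((m + 1 : ℕ) : ℚ) • wstar [m + 1 + 1] else 0)]
    congr 1
    congr 1
    simp_rw [← Nat.multichoose_eq]
    rw [← Finset.mul_sum]
    rw [mcConv (fun j => K.get j) n, h4]
    rw [Nat.multichoose_eq, show m + 1 + n - 1 = m + n by omega]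
    have hq : ((m + 1 : ℕ) : ℚ) * (((m + 1 + n).choose n : ℕ) : ℚ)
        = ((m + 1 + n : ℕ) : ℚ) * (((m + n).choose n : ℕ) : ℚ) := by
      exact_mod_cast congrArg (Nat.cast (R := ℚ)) (nat_id m n)
    push_cast at hq ⊢
    linear_combination ((-1 : ℚ) ^ (m + 1 + 1)) * hq
  · exact fun n hn => wstar_singleton n hn
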